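/- arXiv:1410.2446 — 6 statements merged into one kernel-verified Lean document; each statement's English description precedes it below -/
import Mathlib

section
/- For every integer k ≥ 1 and every a ∈ ℤ, the following identity (the sl₂ T-system) holds in R: χ(k,a)·χ(k,a+2) = χ(k+1,a)·χ(k−1,a+2) + 1. -/
/-!
`R` is the Laurent polynomial ring over `ℤ` in countably many commuting variables
`Y n`, `n : ℤ`, realised as the group algebra of the free abelian group `ℤ →₀ ℤ`.
`Y n e` denotes the monomial `(Y_n)^e`.
-/

/-- The Laurent polynomial ring `ℤ[Y_n^{±1} : n ∈ ℤ]`. -/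
abbrev R : Type := AddMonoidAlgebra ℤ (ℤ →₀ ℤ)

/-- The monomial `Y_n^e`. -/
noncomputable def Y (n e : ℤ) : R := AddMonoidAlgebra.single (Finsupp.single n e) 1

/-- The `q`-character of the Kirillov–Reshetikhin module `W^{(1)}_{k,q^a}`:
`χ(k,a) = Σ_{i=0}^{k} (Π_{t=0}^{k−1−i} Y_{a+2t}) · (Π_{t=k+1−i}^{k} Y_{a+2t}^{−1})`. -/
noncomputable def chi (k : ℕ) (a : ℤ) : R :=
  ∑ i ∈ Finset.range (k + 1),
    (∏ t ∈ Finset.range (k - i), Y (a + 2 * (t : ℤ)) 1) *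
      ∏ t ∈ Finset.Icc (k + 1 - i) k, Y (a + 2 * (t : ℤ)) (-1)

lemma Y_mul_Y_inv (n : ℤ) : Y n 1 * Y n (-1) = 1 := by
  rw [Y, Y, AddMonoidAlgebra.single_mul_single]
  norm_num
  rfl

lemma Icc_insert (a b : ℕ) (h : a ≤ b + 1) :
    Finset.Icc a (b + 1) = insert (b + 1) (Finset.Icc a b) := by
  ext x; simp [Finset.mem_Icc]; omega

lemma prod_Icc_shift (f : ℕ → R) (m n : ℕ) :
    ∏ t ∈ Finset.Icc (m + 1) (n + 1), f t = ∏ t ∈ Finset.Icc m n, f (t + 1) := by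
  rw [← Finset.map_add_right_Icc, Finset.prod_map]
  rfl

/-- Recursion stripping the leading `Y_a`. -/
lemma chi_recA (k : ℕ) (a : ℤ) :
    chi (k + 1) a = Y a 1 * chi k (a + 2)
      + ∏ t ∈ Finset.Icc 1 (k + 1), Y (a + 2 * (t : ℤ)) (-1) := by
  rw [chi, Finset.sum_range_succ]
  have hlast : k + 1 + 1 - (k + 1) = 1 := by omega
  rw [hlast]
  simp only [Nat.sub_self, Finset.range_zero, Finset.prod_empty, one_mul]
  congr 1
  rw [chi, Finset.mul_sum]
  apply Finset.sum_congr rfl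
  intro i hi
  rw [Finset.mem_range] at hi
  have h1 : k + 1 - i = (k - i) + 1 := by omega
  have h2 : k + 1 + 1 - i = (k + 1 - i) + 1 := by omega
  have h3 : k + 1 - i = (k - i) + 1 := by omega
  rw [h1, h2, h3, Finset.prod_range_succ', prod_Icc_shift]
  have e1 : ∏ t ∈ Finset.range (k - i), Y (a + 2 * ((t + 1 : ℕ) : ℤ)) 1
      = ∏ t ∈ Finset.range (k - i), Y (a + 2 + 2 * (t : ℤ)) 1 :=
    Finset.prod_congr rfl (fun t _ => by congr 1; push_cast; ring)
  have e2 : ∏ t ∈ Finset.Icc (k - i + 1) k, Y (a + 2 * ((t + 1 : ℕ) : ℤ)) (-1)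
      = ∏ t ∈ Finset.Icc (k - i + 1) k, Y (a + 2 + 2 * (t : ℤ)) (-1) :=
    Finset.prod_congr rfl (fun t _ => by congr 1; push_cast; ring)
  have e0 : Y (a + 2 * ((0 : ℕ) : ℤ)) 1 = Y a 1 := by norm_num
  rw [e1, e2, e0]
  ring

/-- Recursion stripping the trailing `Y_{a+2(k+1)}^{-1}`. -/
lemma chi_recB (k : ℕ) (a : ℤ) :
    chi (k + 1) a = (∏ t ∈ Finset.range (k + 1), Y (a + 2 * (t : ℤ)) 1)
      + Y (a + 2 * ((k : ℤ) + 1)) (-1) * chi k a := by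
  rw [chi, Finset.sum_range_succ']
  have h0 : (Finset.Icc (k + 1 + 1 - 0) (k + 1) : Finset ℕ) = ∅ := by
    apply Finset.Icc_eq_empty; omega
  rw [Nat.sub_zero, h0, Finset.prod_empty, mul_one, add_comm]
  congr 1
  rw [chi, Finset.mul_sum]
  apply Finset.sum_congr rfl
  intro i hi
  rw [Finset.mem_range] at hi
  have h1 : k + 1 - (i + 1) = k - i := by omega
  have h2 : k + 1 + 1 - (i + 1) = k + 1 - i := by omega
  have h3 : k + 1 - i ≤ k + 1 := by omega
  have h4 : k + 1 - i ≤ k + 1 := by omega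
  rw [h1, h2, Icc_insert _ _ h3, Finset.prod_insert (by simp [Finset.mem_Icc])]
  push_cast
  ring

lemma QP (k : ℕ) (a : ℤ) :
    (∏ t ∈ Finset.Icc 1 k, Y (a + 2 * (t : ℤ)) (-1))
      * ∏ t ∈ Finset.range k, Y (a + 2 + 2 * (t : ℤ)) 1 = 1 := by
  have : (∏ t ∈ Finset.range k, Y (a + 2 + 2 * (t : ℤ)) 1)
      = ∏ t ∈ Finset.Icc 1 k, Y (a + 2 * (t : ℤ)) 1 := by
    rcases k with _ | m
    · simp
    · rw [show Finset.Icc 1 (m + 1) = Finset.Icc (0 + 1) (m + 1) by norm_num,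
        prod_Icc_shift, show Finset.Icc 0 m = Finset.range (m + 1) by ext x; simp]
      apply Finset.prod_congr rfl
      intro t _
      congr 1
      push_cast
      ring
  rw [this, ← Finset.prod_mul_distrib]
  apply Finset.prod_eq_one
  intro t _
  rw [mul_comm]
  exact Y_mul_Y_inv _

/-- The sl₂ T-system: for `k ≥ 1` and `a ∈ ℤ`,
`χ(k,a)·χ(k,a+2) = χ(k+1,a)·χ(k−1,a+2) + 1`. -/
theorem tsystem (k : ℕ) (hk : 1 ≤ k) (a : ℤ) :
    chi k a * chi k (a + 2) = chi (k + 1) a * chi (k - 1) (a + 2) + 1 := by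
  obtain ⟨m, rfl⟩ : ∃ m, k = m + 1 := ⟨k - 1, by omega⟩
  simp only [Nat.add_sub_cancel]
  have hA := chi_recA m a
  have hC := chi_recA (m + 1) a
  have hB := chi_recB m (a + 2)
  have hQ' : (∏ t ∈ Finset.Icc 1 (m + 1 + 1), Y (a + 2 * (t : ℤ)) (-1))
      = Y (a + 2 * ((m : ℤ) + 1 + 1)) (-1)
        * ∏ t ∈ Finset.Icc 1 (m + 1), Y (a + 2 * (t : ℤ)) (-1) := by
    have harg : a + 2 * ((m + 1 + 1 : ℕ) : ℤ) = a + 2 * ((m : ℤ) + 1 + 1) := by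
      push_cast; ring
    rw [Icc_insert _ _ (by omega), Finset.prod_insert (by simp [Finset.mem_Icc]), harg]
  have hQP := QP (m + 1) a
  set Q := ∏ t ∈ Finset.Icc 1 (m + 1), Y (a + 2 * (t : ℤ)) (-1) with hQ
  set P := ∏ t ∈ Finset.range (m + 1), Y (a + 2 + 2 * (t : ℤ)) 1 with hP
  rw [hA, hC, hB, hQ']
  have harg : Y (a + 2 * ((m : ℤ) + 1 + 1)) (-1)
      = Y (a + 2 + 2 * ((m : ℤ) + 1)) (-1) := by congr 1; ring
  rw [harg]
  linear_combination hQP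
end

section
/- For every integer k ≥ 1 and every a ∈ ℤ, the following identity holds in R: χ(k,a)·χ(1,a+2k) = χ(k+1,a) + χ(k−1,a). -/
/-- The `i`-th monomial of `chi k a`. -/
noncomputable def M (a : ℤ) (k i : ℕ) : R :=
  (∏ t ∈ Finset.range (k - i), Y (a + 2 * (t : ℤ)) 1) *
    ∏ t ∈ Finset.Icc (k + 1 - i) k, Y (a + 2 * (t : ℤ)) (-1)

lemma chi_eq (k : ℕ) (a : ℤ) : chi k a = ∑ i ∈ Finset.range (k + 1), M a k i := rfl

lemma Y_mul_Y (n e e' : ℤ) : Y n e * Y n e' = Y n (e + e') := by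
  simp [Y, AddMonoidAlgebra.single_mul_single, Finsupp.single_add]

lemma Y_zero (n : ℤ) : Y n 0 = 1 := by
  simp [Y, AddMonoidAlgebra.one_def]

lemma chi_one (b : ℤ) : chi 1 b = Y b 1 + Y (b + 2) (-1) := by
  simp [chi, Finset.sum_range_succ]

lemma lemA (a : ℤ) (k : ℕ) : M a k 0 * Y (a + 2 * (k : ℤ)) 1 = M a (k + 1) 0 := by
  have h1 : Finset.Icc (k + 1) k = ∅ := Finset.Icc_eq_empty (by omega)
  have h2 : Finset.Icc (k + 1 + 1) (k + 1) = ∅ := Finset.Icc_eq_empty (by omega)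
  simp [M, h1, h2, Finset.prod_range_succ]

lemma lemB (a : ℤ) (j i' : ℕ) (hi : i' ≤ j) :
    M a (j + 1) (i' + 1) * Y (a + 2 * ((j : ℤ) + 1)) 1 = M a j i' := by
  simp only [M, Nat.succ_sub_succ]
  have hc : (a + 2 * ((j : ℤ) + 1)) = a + 2 * (((j + 1 : ℕ) : ℤ)) := by push_cast; ring
  rw [hc, Finset.prod_Icc_succ_top (by omega : j + 1 - i' ≤ j + 1)]
  rw [mul_assoc, mul_assoc, Y_mul_Y]
  norm_num [Y_zero]

lemma lemC (a : ℤ) (k i : ℕ) :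
    M a k i * Y (a + 2 * ((k : ℤ) + 1)) (-1) = M a (k + 1) (i + 1) := by
  simp only [M, Nat.succ_sub_succ]
  have hc : (a + 2 * ((k : ℤ) + 1)) = a + 2 * (((k + 1 : ℕ) : ℤ)) := by push_cast; ring
  rw [hc, mul_assoc, ← Finset.prod_Icc_succ_top (by omega : k + 1 - i ≤ k + 1)]

/-- For `k ≥ 1` and `a ∈ ℤ`: `χ(k,a)·χ(1,a+2k) = χ(k+1,a) + χ(k−1,a)`. -/
theorem chi_mul_fundamental (k : ℕ) (hk : 1 ≤ k) (a : ℤ) :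
    chi k a * chi 1 (a + 2 * (k : ℤ)) = chi (k + 1) a + chi (k - 1) a := by
  rw [chi_one, chi_eq k a, Finset.sum_mul]
  have expand : ∀ i ∈ Finset.range (k + 1),
      M a k i * (Y (a + 2 * (k : ℤ)) 1 + Y (a + 2 * (k : ℤ) + 2) (-1)) =
      M a k i * Y (a + 2 * (k : ℤ)) 1 + M a (k + 1) (i + 1) := by
    intro i _
    rw [mul_add]
    congr 1
    have := lemC a k i
    rw [← this]
    ring_nf
  rw [Finset.sum_congr rfl expand, Finset.sum_add_distrib]
  have first : ∑ i ∈ Finset.range (k + 1), M a k i * Y (a + 2 * (k : ℤ)) 1 =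
      chi (k - 1) a + M a (k + 1) 0 := by
    rw [Finset.sum_range_succ' (fun i => M a k i * Y (a + 2 * (k : ℤ)) 1) k]
    congr 1
    · obtain ⟨j, rfl⟩ : ∃ j, k = j + 1 := ⟨k - 1, by omega⟩
      rw [chi_eq]
      simp only [Nat.add_sub_cancel]
      refine Finset.sum_congr rfl fun i hi => ?_
      rw [Finset.mem_range] at hi
      exact lemB a j i (by omega)
    · exact lemA a k
  have second : chi (k + 1) a = M a (k + 1) 0 + ∑ i ∈ Finset.range (k + 1), M a (k + 1) (i + 1) := by
    rw [chi_eq, Finset.sum_range_succ' (fun i => M a (k + 1) i) (k + 1)]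
    ring
  rw [first, second]
  ring
end

section
/- For all integers a, d, k, r with 1 ≤ d ≤ k+1 ≤ r, the following Ptolemy-type identity holds in R: χ(k+1,a)·χ(r−d+1,a+2d) = χ(r+1,a)·χ(k−d+1,a+2d) + χ(d−1,a)·χ(r−k−1,a+2k+4). (This is the standard exchange relation (1) of Proposition 3.1, expressed through the isomorphism of Theorem 4.1 as an identity of Kirillov–Reshetikhin characters; the two factors on the left correspond to a pair of crossing diagonals of a polygon and the two products on the right to the two pairs of sides of the quadrilateral they span.) -/
noncomputable def P (b : ℤ) (n : ℕ) : R := ∏ t ∈ Finset.range n, Y (b + 2 * (t : ℤ)) 1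

lemma Y_neg_mul (n : ℤ) : Y n (-1) * Y n 1 = 1 := by
  simp only [Y, AddMonoidAlgebra.single_mul_single, mul_one]
  rw [← Finsupp.single_add]
  norm_num
  rfl

lemma cancel (b : ℤ) (s : Finset ℕ) :
    (∏ t ∈ s, Y (b + 2 * (t : ℤ)) (-1)) * ∏ t ∈ s, Y (b + 2 * (t : ℤ)) 1 = 1 := by
  rw [← Finset.prod_mul_distrib]
  exact Finset.prod_eq_one fun t _ => Y_neg_mul _

lemma P_split (b : ℤ) {m n : ℕ} (h : m ≤ n) :
    P b n = P b m * ∏ t ∈ Finset.Ico m n, Y (b + 2 * (t : ℤ)) 1 := by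
  unfold P
  rw [Finset.range_eq_Ico, Finset.range_eq_Ico, Finset.prod_Ico_consecutive _ (Nat.zero_le m) h]

lemma core (b : ℤ) (m : ℕ) :
    chi m b * P b (m + 1) = ∑ j ∈ Finset.range (m + 1), P b j * P b (j + 1) := by
  unfold chi
  rw [Finset.sum_mul, ← Finset.sum_range_reflect (fun j => P b j * P b (j + 1)) (m + 1)]
  apply Finset.sum_congr rfl
  intro i hi
  have him : i ≤ m := by simpa [Nat.lt_succ_iff] using hi
  have h1 : m + 1 - 1 - i = m - i := by omega
  rw [h1, show m - i + 1 = m + 1 - i from by omega]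
  have hsplit : P b (m + 1) = P b (m + 1 - i) * ∏ t ∈ Finset.Ico (m + 1 - i) (m + 1), Y (b + 2 * (t : ℤ)) 1 :=
    P_split b (by omega)
  have hcan : (∏ t ∈ Finset.Icc (m + 1 - i) m, Y (b + 2 * (t : ℤ)) (-1)) *
      ∏ t ∈ Finset.Ico (m + 1 - i) (m + 1), Y (b + 2 * (t : ℤ)) 1 = 1 := by
    rw [← Finset.Ico_add_one_right_eq_Icc]
    exact cancel b _
  rw [hsplit, show (∏ t ∈ Finset.range (m - i), Y (b + 2 * (t : ℤ)) 1) = P b (m - i) from rfl]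
  linear_combination (P b (m - i) * P b (m + 1 - i)) * hcan

lemma P_shift (b : ℤ) (d n : ℕ) : P b (d + n) = P b d * P (b + 2 * d) n := by
  unfold P
  rw [Finset.prod_range_add]
  congr 1
  apply Finset.prod_congr rfl
  intro t _
  congr 1
  push_cast
  ring

lemma key (b : ℤ) (d m : ℕ) :
    chi m (b + 2 * (d : ℤ)) * (P b d * P b (d + m + 1)) =
      ∑ j ∈ Finset.Ico d (d + m + 1), P b j * P b (j + 1) := by
  have h := core (b + 2 * (d : ℤ)) m
  have hs : ∀ n : ℕ, P b (d + n) = P b d * P (b + 2 * d) n := P_shift b d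
  rw [Finset.sum_Ico_eq_sum_range, show d + m + 1 - d = m + 1 from by omega]
  calc chi m (b + 2 * (d : ℤ)) * (P b d * P b (d + m + 1))
      = (chi m (b + 2 * d) * P (b + 2 * d) (m + 1)) * (P b d * P b d) := by
        rw [show d + m + 1 = d + (m + 1) from by omega, hs]; ring
    _ = (∑ j ∈ Finset.range (m + 1), P (b + 2 * d) j * P (b + 2 * d) (j + 1)) * (P b d * P b d) := by rw [h]
    _ = ∑ j ∈ Finset.range (m + 1), P b (d + j) * P b (d + j + 1) := by
        rw [Finset.sum_mul]
        apply Finset.sum_congr rfl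
        intro j _
        rw [hs, show d + j + 1 = d + (j + 1) from by omega, hs]
        ring

lemma isUnit_P (b : ℤ) (n : ℕ) : IsUnit (P b n) := by
  refine IsUnit.of_mul_eq_one (∏ t ∈ Finset.range n, Y (b + 2 * (t : ℤ)) (-1)) ?_
  rw [mul_comm]
  exact cancel b _

/-- The Ptolemy-type identity: for integers `1 ≤ d ≤ k+1 ≤ r` and any `a`,
`χ(k+1,a)·χ(r−d+1,a+2d) = χ(r+1,a)·χ(k−d+1,a+2d) + χ(d−1,a)·χ(r−k−1,a+2k+4)`. -/
theorem ptolemy (a : ℤ) (d k r : ℕ) (hd : 1 ≤ d) (hdk : d ≤ k + 1) (hkr : k + 1 ≤ r) :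
    chi (k + 1) a * chi (r + 1 - d) (a + 2 * (d : ℤ)) =
      chi (r + 1) a * chi (k + 1 - d) (a + 2 * (d : ℤ)) +
        chi (d - 1) a * chi (r - k - 1) (a + 2 * (k : ℤ) + 4) := by
  set A := ∑ j ∈ Finset.Ico 0 d, P a j * P a (j + 1) with hA
  set B := ∑ j ∈ Finset.Ico d (k + 2), P a j * P a (j + 1) with hB
  set C := ∑ j ∈ Finset.Ico (k + 2) (r + 2), P a j * P a (j + 1) with hC
  have h1 : chi (k + 1) a * P a (k + 2) = A + B := by
    have := key a 0 (k + 1)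
    simp only [Nat.cast_zero, mul_zero, add_zero, Nat.zero_add, zero_add] at this
    rw [show P a 0 = 1 from rfl, one_mul] at this
    rw [show k + 1 + 1 = k + 2 from rfl] at this
    rw [this, ← Finset.sum_Ico_consecutive _ (Nat.zero_le d) (by omega : d ≤ k + 2)]
  have h2 : chi (r + 1 - d) (a + 2 * (d : ℤ)) * (P a d * P a (r + 2)) = B + C := by
    have := key a d (r + 1 - d)
    rw [show d + (r + 1 - d) + 1 = r + 2 from by omega] at this
    rw [this, ← Finset.sum_Ico_consecutive _ (by omega : d ≤ k + 2) (by omega : k + 2 ≤ r + 2)]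
  have h3 : chi (r + 1) a * P a (r + 2) = A + (B + C) := by
    have := key a 0 (r + 1)
    simp only [Nat.cast_zero, mul_zero, add_zero, Nat.zero_add, zero_add] at this
    rw [show P a 0 = 1 from rfl, one_mul] at this
    rw [show r + 1 + 1 = r + 2 from rfl] at this
    rw [this, ← Finset.sum_Ico_consecutive _ (Nat.zero_le d) (by omega : d ≤ r + 2),
      ← Finset.sum_Ico_consecutive _ (by omega : d ≤ k + 2) (by omega : k + 2 ≤ r + 2)]
  have h4 : chi (k + 1 - d) (a + 2 * (d : ℤ)) * (P a d * P a (k + 2)) = B := by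
    have := key a d (k + 1 - d)
    rw [show d + (k + 1 - d) + 1 = k + 2 from by omega] at this
    exact this
  have h5 : chi (d - 1) a * P a d = A := by
    have := key a 0 (d - 1)
    simp only [Nat.cast_zero, mul_zero, add_zero, Nat.zero_add, zero_add] at this
    rw [show P a 0 = 1 from rfl, one_mul, show d - 1 + 1 = d from by omega] at this
    rw [this]
  have h6 : chi (r - k - 1) (a + 2 * (k : ℤ) + 4) * (P a (k + 2) * P a (r + 2)) = C := by
    have := key a (k + 2) (r - k - 1)
    rw [show (k + 2) + (r - k - 1) + 1 = r + 2 from by omega,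
      show a + 2 * ((k + 2 : ℕ) : ℤ) = a + 2 * (k : ℤ) + 4 from by push_cast; ring] at this
    exact this
  have hU : IsUnit (P a d * (P a (k + 2) * P a (r + 2))) :=
    ((isUnit_P a d).mul ((isUnit_P a (k + 2)).mul (isUnit_P a (r + 2))))
  apply hU.mul_right_cancel
  linear_combination (chi (r + 1 - d) (a + 2 * (d : ℤ)) * P a d * P a (r + 2)) * h1 +
    (A + B) * h2 - (chi (k + 1 - d) (a + 2 * (d : ℤ)) * P a d * P a (k + 2)) * h3 -
    (A + (B + C)) * h4 - (chi (r - k - 1) (a + 2 * (k : ℤ) + 4) * P a (k + 2) * P a (r + 2)) * h5 -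
    A * h6
end

section
/- For all natural numbers k and ℓ, the Laurent polynomial A^k·B^ℓ ∈ S contains a unique dominant monomial, namely Y10^{k+ℓ}·Y21^{ℓ} with coefficient 1: the coefficient of the monomial Y10^{a}·Y12^{b}·Y21^{c}·Y23^{d} in A^k·B^ℓ is 1 if (a,b,c,d) = (k+ℓ,0,ℓ,0), and is 0 for every other (a,b,c,d) with all of a,b,c,d ≥ 0. (Lemma 5.1.) -/
/-!
`S = ℤ[Y10^{±1}, Y12^{±1}, Y21^{±1}, Y23^{±1}]` is the Laurent polynomial ring
over `ℤ` in four commuting variables, realised as the group algebra of the free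
abelian group `Fin 4 →₀ ℤ`; the indices `0, 1, 2, 3` correspond to the variables
`Y10, Y12, Y21, Y23` respectively (`Yin = Y_{i,ε^n}`, `ε` a primitive fourth
root of unity; this is the case `g = sl₃`, `l = 2`).
-/

/-- The Laurent polynomial ring `ℤ[Y10^{±1}, Y12^{±1}, Y21^{±1}, Y23^{±1}]`. -/
abbrev S : Type := AddMonoidAlgebra ℤ (Fin 4 →₀ ℤ)

/-- The monomial which is the `e`-th power of the `i`-th variable
(`i = 0, 1, 2, 3` for `Y10, Y12, Y21, Y23`). -/
noncomputable def Yv (i : Fin 4) (e : ℤ) : S :=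
  AddMonoidAlgebra.single (Finsupp.single i e) 1

/-- `A = Y10 + Y21·Y12⁻¹ + Y23⁻¹`, the `ε`-character of `L(Y_{1,0})`. -/
noncomputable def A : S := Yv 0 1 + Yv 2 1 * Yv 1 (-1) + Yv 3 (-1)

/-- `B`, the `ε`-character of `L(Y_{1,0}Y_{2,1})`. -/
noncomputable def B : S :=
  Yv 0 1 * Yv 2 1 + Yv 0 1 * Yv 1 1 * Yv 3 (-1) + Yv 2 1 ^ 2 * Yv 1 (-1) +
    2 * (Yv 2 1 * Yv 3 (-1)) + Yv 2 1 * Yv 0 (-1) * Yv 1 (-1) +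
    Yv 1 1 * Yv 3 (-2) + Yv 0 (-1) * Yv 3 (-1)

/-- `C = Y21 + Y12·Y23⁻¹ + Y10⁻¹`, the `ε`-character of `L(Y_{2,1})`. -/
noncomputable def C : S := Yv 2 1 + Yv 1 1 * Yv 3 (-1) + Yv 0 (-1)

/-- `Λ₁ = Y10·Y12 + Y21·Y23·Y10⁻¹·Y12⁻¹ + Y21⁻¹·Y23⁻¹`, the `ε`-character of `L(𝐘₁)`. -/
noncomputable def Lam1 : S :=
  Yv 0 1 * Yv 1 1 + Yv 2 1 * Yv 3 1 * Yv 0 (-1) * Yv 1 (-1) + Yv 2 (-1) * Yv 3 (-1)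

/-- `Λ₂ = Y21·Y23 + Y10·Y12·Y21⁻¹·Y23⁻¹ + Y10⁻¹·Y12⁻¹`, the `ε`-character of `L(𝐘₂)`. -/
noncomputable def Lam2 : S :=
  Yv 2 1 * Yv 3 1 + Yv 0 1 * Yv 1 1 * Yv 2 (-1) * Yv 3 (-1) + Yv 0 (-1) * Yv 1 (-1)

/-- The ring automorphism `σ` of `S` determined by `σ(Y10)=Y12`, `σ(Y12)=Y10`,
`σ(Y21)=Y23`, `σ(Y23)=Y21` (shift of the spectral parameter by `ε²`). -/
noncomputable def σ : S ≃ₐ[ℤ] S :=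
  AddMonoidAlgebra.domCongr ℤ ℤ
    (Finsupp.domCongr (M := ℤ) ((Equiv.swap (0 : Fin 4) 1).trans (Equiv.swap 2 3)))

namespace L51

def F (m : Fin 4 →₀ ℤ) : ℤ := m 1 + 2 * m 3

lemma F_add (u v : Fin 4 →₀ ℤ) : F (u + v) = F u + F v := by
  simp [F]; ring

def Np (p : S) : Prop := ∀ u, p.coeff u ≠ 0 → F u ≤ 0
def Ng (p : S) : Prop := ∀ u, p.coeff u ≠ 0 → F u < 0

lemma Ng.np {p : S} (h : Ng p) : Np p := fun u hu => (h u hu).le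

lemma ng_zero : Ng 0 := fun u hu => by simp at hu

lemma Ng.add {p q : S} (hp : Ng p) (hq : Ng q) : Ng (p + q) := by
  intro u hu
  have h : p.coeff u ≠ 0 ∨ q.coeff u ≠ 0 := by
    by_contra h; push_neg at h
    exact hu (by rw [AddMonoidAlgebra.coeff_add, Finsupp.add_apply, h.1, h.2, add_zero])
  rcases h with h | h
  · exact hp u h
  · exact hq u h

lemma Np.add {p q : S} (hp : Np p) (hq : Np q) : Np (p + q) := by
  intro u hu
  have h : p.coeff u ≠ 0 ∨ q.coeff u ≠ 0 := by
    by_contra h; push_neg at h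
    exact hu (by rw [AddMonoidAlgebra.coeff_add, Finsupp.add_apply, h.1, h.2, add_zero])
  rcases h with h | h
  · exact hp u h
  · exact hq u h

lemma mul_coeff_zero {p q : S} {m : Fin 4 →₀ ℤ}
    (h : ∀ a₁ a₂, p.coeff a₁ ≠ 0 → q.coeff a₂ ≠ 0 → a₁ + a₂ ≠ m) : (p * q).coeff m = 0 := by
  rw [AddMonoidAlgebra.coeff_mul]
  simp only [Finsupp.sum]
  refine Finset.sum_eq_zero fun a₁ h₁ => Finset.sum_eq_zero fun a₂ h₂ => ?_
  rw [if_neg (h a₁ a₂ (Finsupp.mem_support_iff.mp h₁) (Finsupp.mem_support_iff.mp h₂))]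

lemma Ng.mul {p q : S} (hp : Ng p) (hq : Np q) : Ng (p * q) := by
  intro u hu
  by_contra h
  push_neg at h
  apply hu
  apply mul_coeff_zero
  intro a₁ a₂ h1 h2 heq
  have e1 := hp a₁ h1
  have e2 := hq a₂ h2
  have : F u = F a₁ + F a₂ := by rw [← heq, F_add]
  omega

lemma Np.mul_ng {p q : S} (hp : Np p) (hq : Ng q) : Ng (p * q) := by
  intro u hu
  by_contra h
  push_neg at h
  apply hu
  apply mul_coeff_zero
  intro a₁ a₂ h1 h2 heq
  have e1 := hp a₁ h1
  have e2 := hq a₂ h2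
  have : F u = F a₁ + F a₂ := by rw [← heq, F_add]
  omega

lemma Np.mul {p q : S} (hp : Np p) (hq : Np q) : Np (p * q) := by
  intro u hu
  by_contra h
  push_neg at h
  apply hu
  apply mul_coeff_zero
  intro a₁ a₂ h1 h2 heq
  have e1 := hp a₁ h1
  have e2 := hq a₂ h2
  have : F u = F a₁ + F a₂ := by rw [← heq, F_add]
  omega

lemma np_single {w : Fin 4 →₀ ℤ} {r : ℤ} (h : F w ≤ 0) :
    Np (AddMonoidAlgebra.single w r) := by
  intro u hu
  have : w = u := by
    by_contra hne
    rw [AddMonoidAlgebra.coeff_single_apply, if_neg hne] at hu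
    exact hu rfl
  rw [← this]; exact h

lemma ng_single {w : Fin 4 →₀ ℤ} {r : ℤ} (h : F w < 0) :
    Ng (AddMonoidAlgebra.single w r) := by
  intro u hu
  have : w = u := by
    by_contra hne
    rw [AddMonoidAlgebra.coeff_single_apply, if_neg hne] at hu
    exact hu rfl
  rw [← this]; exact h

lemma np_one : Np (1 : S) := by
  rw [AddMonoidAlgebra.one_def]
  exact np_single (by simp [F])

lemma Np.pow {p : S} (hp : Np p) (n : ℕ) : Np (p ^ n) := by
  induction n with
  | zero => simpa using np_one
  | succ n ih => rw [pow_succ]; exact ih.mul hp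

lemma pow_decomp {x e : S} (hx : Np x) (he : Ng e) (n : ℕ) :
    ∃ g, (x + e) ^ n = x ^ n + g ∧ Ng g := by
  induction n with
  | zero => exact ⟨0, by ring, ng_zero⟩
  | succ n ih =>
    obtain ⟨g, hg, hng⟩ := ih
    refine ⟨x ^ n * e + g * (x + e), ?_, ?_⟩
    · rw [pow_succ, pow_succ, hg]; ring
    · exact ((hx.pow n).mul_ng he).add (hng.mul (hx.add he.np))

lemma Yv_mul (i j : Fin 4) (e f : ℤ) :
    Yv i e * Yv j f =
      AddMonoidAlgebra.single (Finsupp.single i e + Finsupp.single j f) 1 := by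
  unfold Yv; rw [AddMonoidAlgebra.single_mul_single, one_mul]

lemma np_Yv (i : Fin 4) (e : ℤ) (h : F (Finsupp.single i e) ≤ 0) : Np (Yv i e) :=
  np_single h

lemma ng_Yv (i : Fin 4) (e : ℤ) (h : F (Finsupp.single i e) < 0) : Ng (Yv i e) :=
  ng_single h



lemma F_single (i : Fin 4) (e : ℤ) :
    F (Finsupp.single i e) = (if i = 1 then e else 0) + 2 * (if i = 3 then e else 0) := by
  simp [F, Finsupp.single_apply]

lemma A_decomp : ∃ e, A = Yv 0 1 + e ∧ Ng e := by
  refine ⟨Yv 2 1 * Yv 1 (-1) + Yv 3 (-1), by unfold A; ring, ?_⟩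
  refine Ng.add ((np_Yv 2 1 ?_).mul_ng (ng_Yv 1 (-1) ?_)) (ng_Yv 3 (-1) ?_) <;>
    simp [F, Finsupp.single_apply]

lemma B_decomp : ∃ e, B = Yv 0 1 * Yv 2 1 + e ∧ Ng e := by
  refine ⟨Yv 0 1 * Yv 1 1 * Yv 3 (-1) + Yv 2 1 ^ 2 * Yv 1 (-1) +
    2 * (Yv 2 1 * Yv 3 (-1)) + Yv 2 1 * Yv 0 (-1) * Yv 1 (-1) +
    Yv 1 1 * Yv 3 (-2) + Yv 0 (-1) * Yv 3 (-1), by unfold B; ring, ?_⟩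
  have h01 : Np (Yv 0 1) := np_Yv 0 1 (by simp [F, Finsupp.single_apply])
  have h0m : Np (Yv 0 (-1)) := np_Yv 0 (-1) (by simp [F, Finsupp.single_apply])
  have h21 : Np (Yv 2 1) := np_Yv 2 1 (by simp [F, Finsupp.single_apply])
  have h1m : Ng (Yv 1 (-1)) := ng_Yv 1 (-1) (by simp [F, Finsupp.single_apply])
  have h3m : Ng (Yv 3 (-1)) := ng_Yv 3 (-1) (by simp [F, Finsupp.single_apply])
  have t2 : Ng (Yv 0 1 * Yv 1 1 * Yv 3 (-1)) := by
    rw [mul_assoc, Yv_mul]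
    exact h01.mul_ng (ng_single (by simp [F, Finsupp.add_apply, Finsupp.single_apply]))
  have t6 : Ng (Yv 1 1 * Yv 3 (-2)) := by
    rw [Yv_mul]
    exact ng_single (by simp [F, Finsupp.add_apply, Finsupp.single_apply])
  have t4 : Ng (2 * (Yv 2 1 * Yv 3 (-1))) := by
    rw [two_mul]
    exact (h21.mul_ng h3m).add (h21.mul_ng h3m)
  exact (((((t2.add (((h21.pow 2).mul_ng h1m))).add t4).add
    ((h21.mul h0m).mul_ng h1m)).add t6).add (h0m.mul_ng h3m))

lemma top_pow (k ℓ : ℕ) :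
    (Yv 0 1) ^ k * (Yv 0 1 * Yv 2 1) ^ ℓ =
      AddMonoidAlgebra.single
        (Finsupp.single (0 : Fin 4) ((k : ℤ) + ℓ) + Finsupp.single 2 (ℓ : ℤ)) 1 := by
  rw [Yv_mul]
  unfold Yv
  rw [AddMonoidAlgebra.single_pow, AddMonoidAlgebra.single_pow,
    AddMonoidAlgebra.single_mul_single, one_pow, one_pow, one_mul]
  congr 1
  simp [Finsupp.smul_single, Finsupp.single_add]
  abel


end L51

open L51 in
/-- Lemma 5.1: `A^k·B^ℓ` contains a unique dominant monomial, namely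
`Y10^{k+ℓ}·Y21^{ℓ}` with coefficient 1. -/
theorem unique_dominant_monomial (k ℓ : ℕ) (a b c d : ℤ)
    (ha : 0 ≤ a) (hb : 0 ≤ b) (hc : 0 ≤ c) (hd : 0 ≤ d) :
    (A ^ k * B ^ ℓ).coeff
        (Finsupp.single (0 : Fin 4) a + Finsupp.single 1 b +
          Finsupp.single 2 c + Finsupp.single 3 d) =
      if (a, b, c, d) = ((k : ℤ) + (ℓ : ℤ), 0, (ℓ : ℤ), 0) then 1 else 0 := by
  obtain ⟨eA, hA, hAng⟩ := A_decomp
  obtain ⟨eB, hB, hBng⟩ := B_decomp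
  have h01 : Np (Yv 0 1) := np_Yv 0 1 (by simp [F, Finsupp.single_apply])
  have h21 : Np (Yv 2 1) := np_Yv 2 1 (by simp [F, Finsupp.single_apply])
  obtain ⟨g₁, hg₁, hg₁ng⟩ := pow_decomp h01 hAng k
  obtain ⟨g₂, hg₂, hg₂ng⟩ := pow_decomp (h01.mul h21) hBng ℓ
  rw [hA, hB, hg₁, hg₂]
  set m : Fin 4 →₀ ℤ := Finsupp.single (0 : Fin 4) a + Finsupp.single 1 b +
    Finsupp.single 2 c + Finsupp.single 3 d with hm
  have hFm : 0 ≤ F m := by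
    have : F m = b + 2 * d := by
      simp [hm, F, Finsupp.add_apply, Finsupp.single_apply]
    omega
  have hrest : Ng ((Yv 0 1) ^ k * g₂ + g₁ * ((Yv 0 1 * Yv 2 1) ^ ℓ + g₂)) :=
    ((h01.pow k).mul_ng hg₂ng).add
      (hg₁ng.mul (((h01.mul h21).pow ℓ).add hg₂ng.np))
  have expand : ((Yv 0 1) ^ k + g₁) * ((Yv 0 1 * Yv 2 1) ^ ℓ + g₂) =
      (Yv 0 1) ^ k * (Yv 0 1 * Yv 2 1) ^ ℓ +
        ((Yv 0 1) ^ k * g₂ + g₁ * ((Yv 0 1 * Yv 2 1) ^ ℓ + g₂)) := by ring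
  rw [expand, AddMonoidAlgebra.coeff_add, Finsupp.add_apply]
  have hz : ((Yv 0 1) ^ k * g₂ + g₁ * ((Yv 0 1 * Yv 2 1) ^ ℓ + g₂)).coeff m = 0 := by
    by_contra h
    exact absurd (hrest m h) (by omega)
  rw [hz, add_zero, top_pow, AddMonoidAlgebra.coeff_single_apply]
  set w : Fin 4 →₀ ℤ := Finsupp.single (0 : Fin 4) ((k : ℤ) + ℓ) + Finsupp.single 2 (ℓ : ℤ)
    with hw
  have key : w = m ↔ (a, b, c, d) = ((k : ℤ) + (ℓ : ℤ), 0, (ℓ : ℤ), 0) := by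
    constructor
    · intro h
      have h0 := DFunLike.congr_fun h 0
      have h1 := DFunLike.congr_fun h 1
      have h2 := DFunLike.congr_fun h 2
      have h3 := DFunLike.congr_fun h 3
      simp [hw, hm, Finsupp.add_apply, Finsupp.single_apply] at h0 h1 h2 h3
      simp [Prod.ext_iff]
      omega
    · intro h
      rw [Prod.ext_iff, Prod.ext_iff, Prod.ext_iff] at h
      simp only at h
      obtain ⟨h1, h2, h3, h4⟩ := h
      subst h1; subst h2; subst h3; subst h4
      simp [hw, hm]
  split_ifs with h1 h2 h2
  · rfl
  · exact absurd (key.mp h1) h2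
  · exact absurd (key.mpr h2) h1
  · rfl
end

section
/- The identity B·(A·σ(C) − 1) = A³ + A²·Λ₂ + A·Λ₁ + 1 holds in S. (This is the second identity of Proposition 5.3 for i = 0: here A·σ(C) − 1 = χ_ε(L(Y_{1,0}Y_{2,3})), so the identity reads χ_ε(L(Y_{1,0}Y_{2,1}))·χ_ε(L(Y_{1,0}Y_{2,3})) = χ_ε(L(Y_{1,0}))³ + χ_ε(L(Y_{1,0}))²·χ_ε(L(𝐘₂)) + χ_ε(L(Y_{1,0}))·χ_ε(L(𝐘₁)) + 1; it is a generalised exchange relation of type G₂.) -/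
lemma Yv_mul (i : Fin 4) (a b : ℤ) : Yv i a * Yv i b = Yv i (a + b) := by
  simp [Yv, AddMonoidAlgebra.single_mul_single, Finsupp.single_add]

lemma Yv_zero (i : Fin 4) : Yv i 0 = 1 := by
  simp [Yv, AddMonoidAlgebra.one_def]

lemma Yv_inv (i : Fin 4) : Yv i 1 * Yv i (-1) = 1 := by
  rw [Yv_mul]; norm_num [Yv_zero]

lemma sigma_Yv (i : Fin 4) (e : ℤ) :
    σ (Yv i e) = Yv (((Equiv.swap (0 : Fin 4) 1).trans (Equiv.swap 2 3)) i) e := by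
  simp [σ, Yv, AddMonoidAlgebra.domCongr_single]

lemma sigma_C : σ C = Yv 3 1 + Yv 0 1 * Yv 2 (-1) + Yv 1 (-1) := by
  have e0 : ((Equiv.swap (0 : Fin 4) 1).trans (Equiv.swap 2 3)) 0 = 1 := by decide
  have e1 : ((Equiv.swap (0 : Fin 4) 1).trans (Equiv.swap 2 3)) 1 = 0 := by decide
  have e2 : ((Equiv.swap (0 : Fin 4) 1).trans (Equiv.swap 2 3)) 2 = 3 := by decide
  have e3 : ((Equiv.swap (0 : Fin 4) 1).trans (Equiv.swap 2 3)) 3 = 2 := by decide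
  simp only [C, map_add, map_mul, sigma_Yv, e0, e1, e2, e3]

lemma key_s13 {R : Type*} [CommRing R] (x0 x1 x2 x3 y0 y1 y2 y3 : R)
    (h0 : x0 * y0 = 1) (h1 : x1 * y1 = 1) (h2 : x2 * y2 = 1) (h3 : x3 * y3 = 1) :
    (x0 * x2 + x0 * x1 * y3 + x2 ^ 2 * y1 + 2 * (x2 * y3) + x2 * y0 * y1 +
        x1 * (y3 * y3) + y0 * y3) *
      ((x0 + x2 * y1 + y3) * (x3 + x0 * y2 + y1) - 1) =
    (x0 + x2 * y1 + y3) ^ 3 +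
      (x0 + x2 * y1 + y3) ^ 2 * (x2 * x3 + x0 * x1 * y2 * y3 + y0 * y1) +
      (x0 + x2 * y1 + y3) * (x0 * x1 + x2 * x3 * y0 * y1 + y2 * y3) + 1 := by
  linear_combination
    (y2*y3^2 + (-1:R)*y1*y3 + x3*y3 + (2:R)*x2*y1*y2*y3 + (-1:R)*x2*y1^2 + x2^2*y1^2*y2 + x0*y2*y3 + (-1:R)*x0*y1 + x0*x2*y1*y2) * h0 +
    (y3^3 + x2*y1*y3^2 + x2*x3*y3^2 + (2:R)*x0*y3^2 + (-1:R)*x0*x2 + (-1:R)*x0*x2*y2*y3^2 + x0*x2*y1*y3 + x0*x2*x3*y3 + (-1:R)*x0*x2^2*y1*y2*y3 + x0^2*y3 + (-1:R)*x0^2*x2*y2*y3) * h1 +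
    (y1*y3 + x2*y1^2 + x0*y3^2 + x0*y1 + (2:R)*x0*x2*y1*y3 + x0*x2^2*y1^2 + (2:R)*x0^2*y3 + (2:R)*x0^2*x2*y1 + x0^3) * h2 +
    (1 + y0*y3 + (2:R)*x2*y3 + x2*y0*y1 + x2^2*y1 + x1*y3^2 + (2:R)*x0*x2 + (2:R)*x0*x1*y3 + x0^2*x1) * h3

/-- Proposition 5.3, second identity for `i = 0` (generalised exchange relation of
type `G₂`): since `A·σ(C) − 1 = χ_ε(L(Y_{1,0}Y_{2,3}))`, it reads
`χ_ε(L(Y_{1,0}Y_{2,1}))·χ_ε(L(Y_{1,0}Y_{2,3})) = A³ + A²·Λ₂ + A·Λ₁ + 1`. -/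
theorem exchange_G2_i0 : B * (A * σ C - 1) = A ^ 3 + A ^ 2 * Lam2 + A * Lam1 + 1 := by
  have h32 : Yv 3 (-2) = Yv 3 (-1) * Yv 3 (-1) := by rw [Yv_mul]; norm_num
  rw [sigma_C, B, A, Lam1, Lam2, h32]
  exact key_s13 (Yv 0 1) (Yv 1 1) (Yv 2 1) (Yv 3 1) (Yv 0 (-1)) (Yv 1 (-1)) (Yv 2 (-1))
    (Yv 3 (-1)) (Yv_inv 0) (Yv_inv 1) (Yv_inv 2) (Yv_inv 3)
end

section
/- The identity B·(σ(A)·C − 1) = C³ + C²·Λ₁ + C·Λ₂ + 1 holds in S. (This is the third identity of Proposition 5.3 for j = 1: here σ(A)·C − 1 = χ_ε(L(Y_{1,2}Y_{2,1})), so the identity reads χ_ε(L(Y_{1,0}Y_{2,1}))·χ_ε(L(Y_{1,2}Y_{2,1})) = χ_ε(L(Y_{2,1}))³ + χ_ε(L(Y_{2,1}))²·χ_ε(L(𝐘₁)) + χ_ε(L(Y_{2,1}))·χ_ε(L(𝐘₂)) + 1; it is a generalised exchange relation of type G₂.) -/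
lemma sigma_A : σ A = Yv 1 1 + Yv 3 1 * Yv 0 (-1) + Yv 2 (-1) := by
  simp only [σ, A, Yv, map_add, map_mul, AddMonoidAlgebra.domCongr_single,
    Finsupp.domCongr_apply, Finsupp.equivMapDomain_single, Equiv.trans_apply]
  simp +decide [Equiv.swap_apply_def]

lemma Yv3_sq : Yv 3 (-2) = Yv 3 (-1) * Yv 3 (-1) := by
  rw [Yv_mul]; norm_num

/-- Proposition 5.3, third identity for `j = 1` (generalised exchange relation of
type `G₂`): since `σ(A)·C − 1 = χ_ε(L(Y_{1,2}Y_{2,1}))`, it reads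
`χ_ε(L(Y_{1,0}Y_{2,1}))·χ_ε(L(Y_{1,2}Y_{2,1})) = C³ + C²·Λ₁ + C·Λ₂ + 1`. -/
theorem exchange_G2_j1 : B * (σ A * C - 1) = C ^ 3 + C ^ 2 * Lam1 + C * Lam2 + 1 := by
  have h0 := Yv_inv 0
  have h1 := Yv_inv 1
  have h2 := Yv_inv 2
  have h3 := Yv_inv 3
  rw [sigma_A]
  simp only [B, C, Lam1, Lam2, Yv3_sq]
  linear_combination
    ((Yv 2 1)*(Yv 2 (-1)) + (Yv 2 1)*(Yv 3 1)*(Yv 0 (-1)) + (Yv 2 1)^2*(Yv 3 1) + ((-1):S)*(Yv 1 1)*(Yv 0 (-1)) + (Yv 1 1)*(Yv 3 1)*(Yv 0 (-1))*(Yv 3 (-1)) + ((-1):S)*(Yv 1 1)*(Yv 2 1) + (2:S)*(Yv 1 1)*(Yv 2 1)*(Yv 3 1)*(Yv 3 (-1)) + ((-1):S)*(Yv 1 1)^2*(Yv 3 (-1)) + (Yv 1 1)^2*(Yv 3 1)*(Yv 3 (-1))^2) * h0 +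
    (((-1):S)*(Yv 0 (-1))*(Yv 3 (-1)) + (Yv 2 1)*(Yv 0 (-1))*(Yv 2 (-1))*(Yv 3 (-1)) + (Yv 2 1)*(Yv 0 (-1))^2 + ((-1):S)*(Yv 2 1)*(Yv 3 1)*(Yv 0 (-1))^2*(Yv 3 (-1)) + (Yv 2 1)^2*(Yv 2 (-1))*(Yv 3 (-1)) + (2:S)*(Yv 2 1)^2*(Yv 0 (-1)) + ((-1):S)*(Yv 2 1)^2*(Yv 3 1)*(Yv 0 (-1))*(Yv 3 (-1)) + (Yv 2 1)^3 + (Yv 1 1)*(Yv 2 1)*(Yv 0 (-1))*(Yv 3 (-1)) + ((-1):S)*(Yv 1 1)*(Yv 2 1)*(Yv 3 1)*(Yv 0 (-1))*(Yv 3 (-1))^2 + (Yv 1 1)*(Yv 2 1)^2*(Yv 3 (-1))) * h1 +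
    ((1:S) + (2:S)*(Yv 0 (-1))*(Yv 3 (-1)) + (Yv 0 (-1))^2*(Yv 1 (-1)) + (2:S)*(Yv 2 1)*(Yv 3 (-1)) + (2:S)*(Yv 2 1)*(Yv 0 (-1))*(Yv 1 (-1)) + (Yv 2 1)^2*(Yv 1 (-1)) + (Yv 1 1)*(Yv 3 (-1))^2 + (Yv 0 1)*(Yv 2 1) + (Yv 0 1)*(Yv 1 1)*(Yv 3 (-1))) * h2 +
    ((Yv 0 (-1))^3 + (2:S)*(Yv 2 1)*(Yv 0 (-1))^2 + (Yv 2 1)^2*(Yv 0 (-1)) + (Yv 1 1)*(Yv 0 (-1)) + (2:S)*(Yv 1 1)*(Yv 0 (-1))^2*(Yv 3 (-1)) + (Yv 1 1)*(Yv 2 1) + (2:S)*(Yv 1 1)*(Yv 2 1)*(Yv 0 (-1))*(Yv 3 (-1)) + (Yv 1 1)^2*(Yv 3 (-1)) + (Yv 1 1)^2*(Yv 0 (-1))*(Yv 3 (-1))^2) * h3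
end
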